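/- For n ∈ ℕ and b ∈ ℝ, the function H(x,y) = y·(1-x)^{n+b} / F(x,y), where F(x,y) = y·(n-1)!·Σ_{ν=0}^{n-1} (-1)^{n+ν} (n+b-ν+1)_ν x^ν/ν! + (b+1)_n x^n, is a first integral of the system ẋ = x(1-x), ẏ = y(n + b x - y) on any open region where 1 - x > 0 and F ≠ 0; that is, x(1-x)·∂H/∂x + y(n + b x - y)·∂H/∂y = 0 on that region. -/

import Mathlib

/-- Pochhammer symbol `(c)_n = c(c+1)⋯(c+n-1)`. -/
noncomputable def poch (c : ℝ) (n : ℕ) : ℝ := ∏ i ∈ Finset.range n, (c + i)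

/-- The function `F(x,y) = y (n-1)! Σ_{ν=0}^{n-1} (-1)^{n+ν} (n+b-ν+1)_ν x^ν/ν! + (b+1)_n x^n`. -/
noncomputable def Fval (n : ℕ) (b : ℝ) (x y : ℝ) : ℝ :=
  y * (Nat.factorial (n - 1) : ℝ) *
      ∑ ν ∈ Finset.range n,
        (-1) ^ (n + ν) * poch ((n : ℝ) + b - ν + 1) ν * x ^ ν / (Nat.factorial ν : ℝ)
    + poch (b + 1) n * x ^ n

/-- The Darboux first integral `H(x,y) = y (1-x)^{n+b} / F(x,y)`. -/
noncomputable def Hval (n : ℕ) (b : ℝ) (x y : ℝ) : ℝ :=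
  y * (1 - x) ^ ((n : ℝ) + b) / Fval n b x y

/-- Coefficient `c_ν = (-1)^{n+ν} (n+b-ν+1)_ν / ν!`. -/
noncomputable def cc (n : ℕ) (b : ℝ) (ν : ℕ) : ℝ :=
  (-1) ^ (n + ν) * poch ((n : ℝ) + b - ν + 1) ν / (Nat.factorial ν : ℝ)

lemma poch_succ' (c : ℝ) (k : ℕ) : poch c (k + 1) = c * poch (c + 1) k := by
  unfold poch
  rw [Finset.prod_range_succ']
  simp only [Nat.cast_zero, add_zero]
  rw [mul_comm]
  congr 1
  refine Finset.prod_congr rfl fun i _ => ?_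
  push_cast; ring

lemma cc_rec (n : ℕ) (b : ℝ) (ν : ℕ) :
    ((n : ℝ) + b - ν) * cc n b ν = -((ν + 1) * cc n b (ν + 1)) := by
  unfold cc
  have h : ((n : ℝ) + b - (↑(ν + 1) : ℝ) + 1) = (n : ℝ) + b - ν := by push_cast; ring
  rw [h, poch_succ']
  have h2 : ((n + (ν + 1)) : ℕ) = (n + ν) + 1 := by omega
  rw [h2, pow_succ]
  have h3 : ((Nat.factorial (ν + 1)) : ℝ) = (ν + 1) * Nat.factorial ν := by
    rw [Nat.factorial_succ]; push_cast; ring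
  rw [h3]
  have hν : (Nat.factorial ν : ℝ) ≠ 0 := Nat.cast_ne_zero.mpr (Nat.factorial_ne_zero ν)
  have hν1 : ((ν : ℝ) + 1) ≠ 0 := by positivity
  field_simp

lemma key (n : ℕ) (b x : ℝ) :
    x * (1 - x) * (∑ ν ∈ Finset.range n, cc n b ν * (ν * x ^ (ν - 1)))
      + ((n : ℝ) + b) * x * (∑ ν ∈ Finset.range n, cc n b ν * x ^ ν)
      = -((n : ℝ) * cc n b n * x ^ n) := by
  have htel := Finset.sum_range_sub' (fun k => (k : ℝ) * cc n b k * x ^ k) n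
  rw [Finset.mul_sum, Finset.mul_sum, ← Finset.sum_add_distrib]
  rw [Finset.sum_congr rfl (fun ν _ => ?_), htel]
  · simp
  · show x * (1 - x) * (cc n b ν * (ν * x ^ (ν - 1))) + ((n : ℝ) + b) * x * (cc n b ν * x ^ ν)
      = (ν : ℝ) * cc n b ν * x ^ ν - (((ν + 1 : ℕ)) : ℝ) * cc n b (ν + 1) * x ^ (ν + 1)
    have hr := cc_rec n b ν
    cases ν with
    | zero => simp only [Nat.cast_zero] at hr ⊢; push_cast; linear_combination x * hr
    | succ m =>
        simp only [Nat.add_sub_cancel]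
        push_cast at hr ⊢
        linear_combination x ^ (m + 2) * hr

lemma cc_const (n : ℕ) (hn : 1 ≤ n) (b : ℝ) :
    ((Nat.factorial (n - 1) : ℝ)) * ((n : ℝ) * cc n b n) = poch (b + 1) n := by
  unfold cc
  have h1 : ((-1 : ℝ)) ^ (n + n) = 1 := Even.neg_one_pow ⟨n, rfl⟩
  have h2 : ((n : ℝ) + b - n + 1) = b + 1 := by ring
  have h3 : ((n : ℝ)) * (Nat.factorial (n - 1) : ℝ) = (Nat.factorial n : ℝ) := by
    rw [← Nat.cast_mul, Nat.mul_factorial_pred (by omega)]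
  have hν : (Nat.factorial n : ℝ) ≠ 0 := Nat.cast_ne_zero.mpr (Nat.factorial_ne_zero n)
  rw [h1, h2]
  field_simp
  linear_combination poch (b+1) n * h3

lemma Fval_eq (n : ℕ) (b x y : ℝ) :
    Fval n b x y = y * (Nat.factorial (n - 1) : ℝ) * (∑ ν ∈ Finset.range n, cc n b ν * x ^ ν)
      + poch (b + 1) n * x ^ n := by
  unfold Fval cc
  congr 2
  refine Finset.sum_congr rfl fun ν _ => ?_
  ring

lemma FderivX (n : ℕ) (b x y : ℝ) :
    HasDerivAt (fun t => Fval n b t y)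
      (y * (Nat.factorial (n - 1) : ℝ) * (∑ ν ∈ Finset.range n, cc n b ν * (ν * x ^ (ν - 1)))
        + poch (b + 1) n * (n * x ^ (n - 1))) x := by
  have : (fun t => Fval n b t y)
      = fun t => y * (Nat.factorial (n - 1) : ℝ) * (∑ ν ∈ Finset.range n, cc n b ν * t ^ ν)
          + poch (b + 1) n * t ^ n := funext fun t => Fval_eq n b t y
  rw [this]
  exact (((HasDerivAt.fun_sum fun ν _ => (hasDerivAt_pow ν x).const_mul (cc n b ν)).const_mul
    _)).add ((hasDerivAt_pow n x).const_mul _)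

lemma FderivY (n : ℕ) (b x y : ℝ) :
    HasDerivAt (fun t => Fval n b x t)
      ((Nat.factorial (n - 1) : ℝ) * (∑ ν ∈ Finset.range n, cc n b ν * x ^ ν)) y := by
  have : (fun t => Fval n b x t)
      = fun t => t * ((Nat.factorial (n - 1) : ℝ) * (∑ ν ∈ Finset.range n, cc n b ν * x ^ ν))
          + poch (b + 1) n * x ^ n := funext fun t => by rw [Fval_eq]; ring
  rw [this]
  simpa using ((hasDerivAt_id y).mul_const ((Nat.factorial (n - 1) : ℝ) * (∑ ν ∈ Finset.range n, cc n b ν * x ^ ν))).add_const (poch (b + 1) n * x ^ n)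

/-- `H` is a first integral of `ẋ = x(1-x)`, `ẏ = y(n+bx-y)` on any region where
`1 - x > 0` and `F ≠ 0`:  `x(1-x)H_x + y(n+bx-y)H_y = 0` there. -/
theorem H_first_integral (n : ℕ) (hn : 1 ≤ n) (b : ℝ) (x y : ℝ)
    (hx : 1 - x > 0) (hF : Fval n b x y ≠ 0) :
    x * (1 - x) * deriv (fun t => Hval n b t y) x
        + y * ((n : ℝ) + b * x - y) * deriv (fun t => Hval n b x t) y = 0 := by
  set p : ℝ := (n : ℝ) + b with hp
  have h0 : HasDerivAt (fun t : ℝ => 1 - t) (-1) x := (hasDerivAt_id x).const_sub 1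
  have h1 : HasDerivAt (fun t : ℝ => (1 - t) ^ p) (p * (1 - x) ^ (p - 1) * (-1)) x :=
    (Real.hasDerivAt_rpow_const (x := 1 - x) (p := p) (Or.inl hx.ne')).comp x h0
  have hHx : HasDerivAt (fun t => Hval n b t y)
      ((y * (p * (1 - x) ^ (p - 1) * (-1)) * Fval n b x y
        - y * (1 - x) ^ p *
          (y * (Nat.factorial (n - 1) : ℝ) * (∑ ν ∈ Finset.range n, cc n b ν * (ν * x ^ (ν - 1)))
            + poch (b + 1) n * (n * x ^ (n - 1)))) / (Fval n b x y) ^ 2) x :=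
    (h1.const_mul y).div (FderivX n b x y) hF
  have hHy : HasDerivAt (fun t => Hval n b x t)
      ((1 * (1 - x) ^ p * Fval n b x y
        - y * (1 - x) ^ p *
          ((Nat.factorial (n - 1) : ℝ) * (∑ ν ∈ Finset.range n, cc n b ν * x ^ ν)))
        / (Fval n b x y) ^ 2) y := by
    have h2 : HasDerivAt (fun t : ℝ => t * (1 - x) ^ p) (1 * (1 - x) ^ p) y :=
      (hasDerivAt_id y).mul_const _
    exact h2.div (FderivY n b x y) hF
  rw [hHx.deriv, hHy.deriv]
  have hE1 : (1 - x) ^ (p - 1) * (1 - x) = (1 - x) ^ p := by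
    rw [← Real.rpow_add_one hx.ne']; ring_nf
  have hxp : x ^ (n - 1) * x = x ^ n := by
    rw [← pow_succ]; congr 1; omega
  have hFe := Fval_eq n b x y
  have hkey := key n b x
  have hconst := cc_const n hn b
  set S := ∑ ν ∈ Finset.range n, cc n b ν * x ^ ν
  set D := ∑ ν ∈ Finset.range n, cc n b ν * (ν * x ^ (ν - 1))
  set K := (Nat.factorial (n - 1) : ℝ)
  set C := poch (b + 1) n
  set E := (1 - x) ^ p
  set E1 := (1 - x) ^ (p - 1)
  set F := Fval n b x y
  field_simp
  linear_combination (-(y * p * x * F)) * hE1 + (y * E * (-(p * x) + (n : ℝ) + b * x - y)) * hFe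
    + (-(y * E * C * (n : ℝ) * (1 - x))) * hxp + (-(y ^ 2 * E * K)) * hkey
    + (y ^ 2 * E * x ^ n) * hconst
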